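/- For the three-dimensional ℓ_p unit ball K_p with 2 ≤ p < ∞ (and for the cube p = ∞), K_p is covered by the eight translates √(2/3)·K_p + (±1/3, ±1/3, ±1/3). Hence γ₈(K_p) ≤ √(2/3). -/

import Mathlib

open Pointwise

/-- `gamma m K` is the infimum of all `r > 0` such that `K` can be covered by
`m` translates of `r • K`. -/
noncomputable def gamma {E : Type*} [NormedAddCommGroup E] [NormedSpace ℝ E]
    (m : ℕ) (K : Set E) : ℝ :=
  sInf {r : ℝ | 0 < r ∧ ∃ x : Fin m → E, K ⊆ ⋃ i, (x i +ᵥ r • K)}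

/-- The sign `1` or `-1` associated to a boolean. -/
def sgn (b : Bool) : ℝ := if b then 1 else -1

lemma aux_key1 (p t : ℝ) (hp : 1 ≤ p) (ht0 : 0 ≤ t) (ht1 : t ≤ 1) :
    |t - 1/3| ^ p ≤ (2/3 : ℝ) ^ p * t ^ p + (1/3 : ℝ) ^ p * (1 - t ^ p) := by
  have hp0 : (0:ℝ) ≤ p := le_trans zero_le_one hp
  have htp0 : (0:ℝ) ≤ t ^ p := Real.rpow_nonneg ht0 p
  have htp1 : t ^ p ≤ 1 := Real.rpow_le_one ht0 ht1 hp0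
  rcases le_or_gt t (1/3) with h | h
  · have h1 : |t - 1/3| ≤ 1/3 := by rw [abs_sub_le_iff]; constructor <;> linarith
    have h2 : |t - 1/3| ^ p ≤ (1/3:ℝ) ^ p :=
      Real.rpow_le_rpow (abs_nonneg _) h1 hp0
    have h3 : (1/3:ℝ) ^ p ≤ (2/3:ℝ) ^ p :=
      Real.rpow_le_rpow (by norm_num) (by norm_num) hp0
    nlinarith
  · have h1 : |t - 1/3| ≤ (2/3) * t := by
      rw [abs_sub_le_iff]; constructor <;> linarith
    have h2 : |t - 1/3| ^ p ≤ ((2/3) * t) ^ p :=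
      Real.rpow_le_rpow (abs_nonneg _) h1 hp0
    rw [Real.mul_rpow (by norm_num) ht0] at h2
    nlinarith [Real.rpow_nonneg (show (0:ℝ) ≤ 1/3 by norm_num) p]

lemma aux_key2 (p : ℝ) (hp : 2 ≤ p) :
    (2/3:ℝ) ^ p + 2 * (1/3:ℝ) ^ p ≤ (2/3:ℝ) ^ (p/2) := by
  set a : ℝ := (2/3:ℝ) ^ (p/2) with ha_def
  set b : ℝ := (1/3:ℝ) ^ (p/2) with hb_def
  have ha0 : 0 ≤ a := Real.rpow_nonneg (by norm_num) _
  have hb0 : 0 ≤ b := Real.rpow_nonneg (by norm_num) _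
  have hA : (2/3:ℝ) ^ p = a * a := by
    rw [ha_def, ← Real.rpow_add (by norm_num)]; ring_nf
  have hB : (1/3:ℝ) ^ p = b * b := by
    rw [hb_def, ← Real.rpow_add (by norm_num)]; ring_nf
  have ha : a ≤ 2/3 := by
    calc a ≤ (2/3:ℝ) ^ (1:ℝ) :=
          Real.rpow_le_rpow_of_exponent_ge (by norm_num) (by norm_num) (by linarith)
      _ = 2/3 := Real.rpow_one _
  have hb : b ≤ a / 2 := by
    have h1 : b = (1/2:ℝ) ^ (p/2) * a := by
      rw [hb_def, ha_def, ← Real.mul_rpow (by norm_num) (by norm_num)]; norm_num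
    have h2 : (1/2:ℝ) ^ (p/2) ≤ (1/2:ℝ) ^ (1:ℝ) :=
      Real.rpow_le_rpow_of_exponent_ge (by norm_num) (by norm_num) (by linarith)
    rw [Real.rpow_one] at h2
    nlinarith [mul_le_mul_of_nonneg_right h2 ha0, h1]
  rw [hA, hB]; nlinarith

lemma aux_abs (u : ℝ) : |u - sgn (decide (0 ≤ u)) / 3| = |(|u| - 1/3)| := by
  rcases le_or_gt 0 u with h | h
  · simp [sgn, h, abs_of_nonneg h]
  · simp only [sgn, decide_eq_true_eq]
    rw [if_neg (by linarith), abs_of_neg h]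
    rw [show u - (-1)/3 = -(-u - 1/3) by ring, abs_neg]

lemma aux_le_one (p u : ℝ) (hp : 0 < p) (h : |u| ^ p ≤ 1) : |u| ≤ 1 := by
  by_contra hc
  push_neg at hc
  have := Real.one_lt_rpow_iff_of_pos (by positivity : (0:ℝ) < |u|) |>.mpr (Or.inl ⟨hc, hp⟩)
  linarith

lemma aux_sum (p : ℝ) (hp : 2 ≤ p) (x y z : ℝ)
    (h : |x| ^ p + |y| ^ p + |z| ^ p ≤ 1) :
    |(|x| - 1/3)| ^ p + |(|y| - 1/3)| ^ p + |(|z| - 1/3)| ^ p ≤ (2/3:ℝ) ^ (p/2) := by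
  have hp1 : (1:ℝ) ≤ p := by linarith
  have hx0 := Real.rpow_nonneg (abs_nonneg x) p
  have hy0 := Real.rpow_nonneg (abs_nonneg y) p
  have hz0 := Real.rpow_nonneg (abs_nonneg z) p
  have hx1 : |x| ≤ 1 := aux_le_one p x (by linarith) (by linarith)
  have hy1 : |y| ≤ 1 := aux_le_one p y (by linarith) (by linarith)
  have hz1 : |z| ≤ 1 := aux_le_one p z (by linarith) (by linarith)
  have k1 := aux_key1 p |x| hp1 (abs_nonneg x) hx1
  have k2 := aux_key1 p |y| hp1 (abs_nonneg y) hy1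
  have k3 := aux_key1 p |z| hp1 (abs_nonneg z) hz1
  have k4 := aux_key2 p hp
  have hmono : (1/3:ℝ) ^ p ≤ (2/3:ℝ) ^ p :=
    Real.rpow_le_rpow (by norm_num) (by norm_num) (by linarith)
  nlinarith

lemma gamma_le_of_cover {E : Type*} [NormedAddCommGroup E] [NormedSpace ℝ E]
    (K : Set E) (r : ℝ) (hr : 0 < r) (c : Bool × Bool × Bool → E)
    (hc : K ⊆ ⋃ e : Bool × Bool × Bool, (c e +ᵥ r • K)) :
    gamma 8 K ≤ r := by
  have hcard : Fintype.card (Bool × Bool × Bool) = 8 := by decide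
  let eqv : Bool × Bool × Bool ≃ Fin 8 := Fintype.equivFinOfCardEq hcard
  apply csInf_le
  · exact ⟨0, fun x hx => le_of_lt hx.1⟩
  · refine ⟨hr, fun i => c (eqv.symm i), fun w hw => ?_⟩
    obtain ⟨S, ⟨e, rfl⟩, hwS⟩ := hc hw
    exact Set.mem_iUnion.2 ⟨eqv e, by simpa using hwS⟩

lemma mem_translate (K : Set (ℝ × ℝ × ℝ)) (s : ℝ) (hs : 0 < s) (c w : ℝ × ℝ × ℝ)
    (h : ((s⁻¹ * (w.1 - c.1), s⁻¹ * (w.2.1 - c.2.1), s⁻¹ * (w.2.2 - c.2.2)) : ℝ × ℝ × ℝ) ∈ K) :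
    w ∈ c +ᵥ s • K := by
  have hs' : s ≠ 0 := ne_of_gt hs
  refine Set.mem_vadd_set.2
    ⟨s • ((s⁻¹ * (w.1 - c.1), s⁻¹ * (w.2.1 - c.2.1), s⁻¹ * (w.2.2 - c.2.2)) : ℝ × ℝ × ℝ),
      Set.smul_mem_smul_set h, ?_⟩
  show c + _ = w
  rw [Prod.smul_mk, Prod.smul_mk]
  simp only [smul_eq_mul, Prod.mk_add_mk, Prod.ext_iff]
  exact ⟨by field_simp; simp, by field_simp; simp, by field_simp; simp⟩

theorem stmt_12 (p : ℝ) (hp : 2 ≤ p)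
    (Kp : Set (ℝ × ℝ × ℝ))
    (hKp : Kp = {w : ℝ × ℝ × ℝ | |w.1| ^ p + |w.2.1| ^ p + |w.2.2| ^ p ≤ 1})
    (Kcube : Set (ℝ × ℝ × ℝ))
    (hKcube : Kcube = {w : ℝ × ℝ × ℝ | |w.1| ≤ 1 ∧ |w.2.1| ≤ 1 ∧ |w.2.2| ≤ 1})
    (s : ℝ) (hs : s = Real.sqrt (2/3)) :
    (Kp ⊆ ⋃ e : Bool × Bool × Bool,
        (((sgn e.1 / 3, sgn e.2.1 / 3, sgn e.2.2 / 3) : ℝ × ℝ × ℝ) +ᵥ s • Kp)) ∧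
      gamma 8 Kp ≤ Real.sqrt (2/3) ∧
    (Kcube ⊆ ⋃ e : Bool × Bool × Bool,
        (((sgn e.1 / 3, sgn e.2.1 / 3, sgn e.2.2 / 3) : ℝ × ℝ × ℝ) +ᵥ s • Kcube)) ∧
      gamma 8 Kcube ≤ Real.sqrt (2/3) := by
  have hs0 : 0 < s := by rw [hs]; exact Real.sqrt_pos.mpr (by norm_num)
  have hs23 : (2:ℝ)/3 ≤ s := by
    nlinarith [Real.sq_sqrt (show (0:ℝ) ≤ 2/3 by norm_num), Real.sqrt_nonneg (2/3:ℝ),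
      hs ▸ hs0]
  have hsp : s ^ p = (2/3:ℝ) ^ (p/2) := by
    rw [hs, Real.sqrt_eq_rpow, ← Real.rpow_mul (by norm_num)]
    ring_nf
  -- covering of Kp
  have coverp : Kp ⊆ ⋃ e : Bool × Bool × Bool,
      (((sgn e.1 / 3, sgn e.2.1 / 3, sgn e.2.2 / 3) : ℝ × ℝ × ℝ) +ᵥ s • Kp) := by
    intro w hw
    rw [hKp] at hw
    refine Set.mem_iUnion.2 ⟨(decide (0 ≤ w.1), decide (0 ≤ w.2.1), decide (0 ≤ w.2.2)),
      mem_translate Kp s hs0 _ w ?_⟩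
    rw [hKp]
    show |s⁻¹ * (w.1 - sgn (decide (0 ≤ w.1)) / 3)| ^ p +
        |s⁻¹ * (w.2.1 - sgn (decide (0 ≤ w.2.1)) / 3)| ^ p +
        |s⁻¹ * (w.2.2 - sgn (decide (0 ≤ w.2.2)) / 3)| ^ p ≤ 1
    have habs : ∀ u : ℝ, |s⁻¹ * (u - sgn (decide (0 ≤ u)) / 3)| ^ p
        = (s ^ p)⁻¹ * |(|u| - 1/3)| ^ p := by
      intro u
      rw [abs_mul, abs_of_nonneg (inv_nonneg.mpr hs0.le), aux_abs,
        Real.mul_rpow (inv_nonneg.mpr hs0.le) (abs_nonneg _),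
        Real.inv_rpow hs0.le]
    rw [habs, habs, habs]
    have hsum := aux_sum p hp w.1 w.2.1 w.2.2 hw
    rw [← hsp] at hsum
    have hsp0 : 0 < s ^ p := Real.rpow_pos_of_pos hs0 p
    calc (s ^ p)⁻¹ * |(|w.1| - 1/3)| ^ p + (s ^ p)⁻¹ * |(|w.2.1| - 1/3)| ^ p
          + (s ^ p)⁻¹ * |(|w.2.2| - 1/3)| ^ p
        = (|(|w.1| - 1/3)| ^ p + |(|w.2.1| - 1/3)| ^ p + |(|w.2.2| - 1/3)| ^ p) / s ^ p := by
          ring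
      _ ≤ 1 := (div_le_one hsp0).mpr hsum
  -- covering of Kcube
  have coverc : Kcube ⊆ ⋃ e : Bool × Bool × Bool,
      (((sgn e.1 / 3, sgn e.2.1 / 3, sgn e.2.2 / 3) : ℝ × ℝ × ℝ) +ᵥ s • Kcube) := by
    intro w hw
    rw [hKcube] at hw
    obtain ⟨h1, h2, h3⟩ := hw
    refine Set.mem_iUnion.2 ⟨(decide (0 ≤ w.1), decide (0 ≤ w.2.1), decide (0 ≤ w.2.2)),
      mem_translate Kcube s hs0 _ w ?_⟩
    rw [hKcube]
    have habs : ∀ u : ℝ, |u| ≤ 1 → |s⁻¹ * (u - sgn (decide (0 ≤ u)) / 3)| ≤ 1 := by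
      intro u hu
      rw [abs_mul, abs_of_nonneg (inv_nonneg.mpr hs0.le), aux_abs]
      have h5 : |(|u| - 1/3)| ≤ 2/3 := by
        rw [abs_sub_le_iff]
        have := abs_nonneg u
        constructor <;> linarith
      rw [inv_mul_le_iff₀ hs0]
      nlinarith
    exact ⟨habs w.1 h1, habs w.2.1 h2, habs w.2.2 h3⟩
  refine ⟨coverp, ?_, coverc, ?_⟩
  · rw [← hs]; exact gamma_le_of_cover Kp s hs0 _ coverp
  · rw [← hs]; exact gamma_le_of_cover Kcube s hs0 _ coverc
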